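/- Let (Ω, Σ, μ, P, t) be an epistemic model. The model satisfies Self-Evidence of Beliefs (P(ω) ⊆ (↑t(ω)) for every ω) if and only if for every p ∈ [0,1] and every measurable E, B^p(E) ⊆ K(B^p(E)). -/
import Mathlib


open MeasureTheory

/-- An epistemic model over a measurable space `Ω` with prior `μ`. -/
structure EpiModel (Ω : Type) [MeasurableSpace Ω] (μ : Measure Ω) where
  P : Ω → Set Ω
  t : Ω → Set Ω → ℝ
  prob : IsProbabilityMeasure μ
  P_meas : ∀ ω, MeasurableSet (P ω)
  K_meas : ∀ E : Set Ω, MeasurableSet E → MeasurableSet {ω | P ω ⊆ E}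
  t_nonneg : ∀ ω E, 0 ≤ t ω E
  t_le_one : ∀ ω E, t ω E ≤ 1
  t_meas : ∀ E : Set Ω, MeasurableSet E → Measurable fun ω => t ω E
  P_pos : ∀ ω, 0 < μ (P ω)

namespace EpiModel

variable {Ω : Type} [MeasurableSpace Ω] {μ : Measure Ω}

/-- The `p`-belief operator `B^p`. -/
def B (M : EpiModel Ω μ) (p : ℝ) (E : Set Ω) : Set Ω := {ω | p ≤ M.t ω E}

/-- The qualitative belief operator `K`. -/
def K (M : EpiModel Ω μ) (A : Set Ω) : Set Ω := {ω | M.P ω ⊆ A}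

/-- `(↑t(ω))`. -/
def up (M : EpiModel Ω μ) (ω : Ω) : Set Ω :=
  {ω' | ∀ E : Set Ω, MeasurableSet E → M.t ω E ≤ M.t ω' E}

/-- `(↓t(ω))`. -/
def down (M : EpiModel Ω μ) (ω : Ω) : Set Ω :=
  {ω' | ∀ E : Set Ω, MeasurableSet E → M.t ω' E ≤ M.t ω E}

/-- `[t(ω)] = (↑t(ω)) ∩ (↓t(ω))`. -/
def cl (M : EpiModel Ω μ) (ω : Ω) : Set Ω := M.up ω ∩ M.down ω

/-- Invariance: the prior is the expectation of the posteriors. -/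
def Invariance (M : EpiModel Ω μ) : Prop :=
  ∀ E : Set Ω, MeasurableSet E → (μ E).toReal = ∫ ω, M.t ω E ∂μ

/-- Entailment: `t(ω, P(ω)) = 1`. -/
def Entailment (M : EpiModel Ω μ) : Prop := ∀ ω, M.t ω (M.P ω) = 1

/-- Self-Evidence of Beliefs: `P(ω) ⊆ (↑t(ω))`. -/
def SelfEvidence (M : EpiModel Ω μ) : Prop := ∀ ω, M.P ω ⊆ M.up ω

/-- Each `t(ω,·)` is the restriction of a countably additive probability measure. -/
def AdditiveTypes (M : EpiModel Ω μ) : Prop :=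
  ∀ ω, ∃ ν : Measure Ω, IsProbabilityMeasure ν ∧
    ∀ E : Set Ω, MeasurableSet E → M.t ω E = (ν E).toReal

/-- A regular model. -/
def Regular (M : EpiModel Ω μ) : Prop :=
  M.AdditiveTypes ∧ M.Invariance ∧ M.Entailment ∧ M.SelfEvidence

/-- Each type is the Bayes conditional probability given the information set. -/
def Bayes (M : EpiModel Ω μ) : Prop :=
  ∀ (ω : Ω) (E : Set Ω), MeasurableSet E →
    M.t ω E = (μ (E ∩ M.P ω)).toReal / (μ (M.P ω)).toReal

/-- A discrete environment: countable states, powerset σ-algebra, full-support prior. -/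
def Discrete (Ω : Type) [MeasurableSpace Ω] (μ : Measure Ω) : Prop :=
  Countable Ω ∧ (∀ A : Set Ω, MeasurableSet A) ∧ ∀ ω : Ω, 0 < μ {ω}

/-- `{P(ω)}` forms a partition. -/
def Partitional (M : EpiModel Ω μ) : Prop :=
  (∀ ω, ω ∈ M.P ω) ∧ ∀ ω ω', ω' ∈ M.P ω → M.P ω' = M.P ω

end EpiModel

/-- Self-Evidence of Beliefs iff `B^p(E) ⊆ K(B^p(E))`. -/
theorem statement2 {Ω : Type} [MeasurableSpace Ω] {μ : MeasureTheory.Measure Ω}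
    (M : EpiModel Ω μ) :
    M.SelfEvidence ↔
      ∀ p ∈ Set.Icc (0 : ℝ) 1, ∀ E : Set Ω, MeasurableSet E →
        M.B p E ⊆ M.K (M.B p E) := by
  constructor
  · intro h p hp E hE ω hω ω' hω'
    exact le_trans hω (h ω hω' E hE)
  · intro h ω ω' hω' E hE
    have hp : M.t ω E ∈ Set.Icc (0:ℝ) 1 := ⟨M.t_nonneg ω E, M.t_le_one ω E⟩
    exact h _ hp E hE (le_refl (M.t ω E) : ω ∈ M.B (M.t ω E) E) hω'
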